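/- For ε ∈ {+1, −1}, one has Σ^ξ_n ξ^{ε(n^2−1)/4} · ( (w^n − w^{−n})/(w − w^{−1}) )^2 = −2ε · γ_ε(ξ) · w^{−ε}/(w − w^{−1}), and in particular this complex number is nonzero. -/

import Mathlib

open Finset

private lemma rot_one (r : ℕ) (h : ℤ → ℂ) (hh : ∀ x : ℤ, h (x + r) = h x) :
    ∑ k ∈ Finset.range r, h ((k : ℤ) + 1) = ∑ k ∈ Finset.range r, h (k : ℤ) := by
  have h1 : ∑ k ∈ Finset.range (r+1), h (k:ℤ)
      = (∑ k ∈ Finset.range r, h ((k:ℤ)+1)) + h 0 := by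
    rw [Finset.sum_range_succ' (fun k : ℕ => h (k:ℤ)) r]
    simp only [Nat.cast_add, Nat.cast_one, Nat.cast_zero]
  have h2 : ∑ k ∈ Finset.range (r+1), h (k:ℤ)
      = (∑ k ∈ Finset.range r, h (k:ℤ)) + h r := Finset.sum_range_succ _ r
  have h3 : h (r:ℤ) = h 0 := by simpa using hh 0
  rw [h1, h3] at h2
  exact add_right_cancel h2

private lemma rot (r : ℕ) (g : ℤ → ℂ) (hg : ∀ x : ℤ, g (x + r) = g x) (c : ℤ) :
    ∑ k ∈ Finset.range r, g ((k : ℤ) + c) = ∑ k ∈ Finset.range r, g (k : ℤ) := by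
  induction c using Int.induction_on with
  | zero => simp
  | succ c ih =>
      have step := rot_one r (fun x => g (x + c))
        (fun x => by
          show g (x + (r:ℤ) + c) = g (x + c)
          rw [show x + (r:ℤ) + c = (x + c) + r by ring]; exact hg (x + c))
      calc ∑ k ∈ Finset.range r, g ((k:ℤ) + (c+1))
          = ∑ k ∈ Finset.range r, g (((k:ℤ) + 1) + c) := by
            apply Finset.sum_congr rfl; intro k _; congr 1; ring
        _ = ∑ k ∈ Finset.range r, g ((k:ℤ) + c) := step
        _ = _ := ih
  | pred c ih =>
      have step := rot_one r (fun x => g (x + (-c - 1)))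
        (fun x => by
          show g (x + (r:ℤ) + (-c-1)) = g (x + (-c-1))
          rw [show x + (r:ℤ) + (-c-1) = (x + (-c-1)) + r by ring]; exact hg _)
      have e2 : ∑ k ∈ Finset.range r, g ((k:ℤ) + -((c:ℤ)+1))
          = ∑ k ∈ Finset.range r, g ((k:ℤ) + (-(c:ℤ) - 1)) := by
        apply Finset.sum_congr rfl; intro k _; congr 1; ring
      have e1 : ∑ k ∈ Finset.range r, g (((k:ℤ) + 1) + (-(c:ℤ) - 1))
          = ∑ k ∈ Finset.range r, g ((k:ℤ) + -(c:ℤ)) := by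
        apply Finset.sum_congr rfl; intro k _; congr 1; ring
      have step' : ∑ k ∈ Finset.range r, g (((k:ℤ) + 1) + (-(c:ℤ) - 1))
          = ∑ k ∈ Finset.range r, g ((k:ℤ) + (-(c:ℤ) - 1)) := step
      rw [← step', e1, ih]

private lemma sum_odd_reindex (r : ℕ) (f : ℕ → ℂ) :
    ∑ n ∈ (Finset.range (2 * r)).filter (fun n => Odd n), f n
      = ∑ k ∈ Finset.range r, f (2 * k + 1) := by
  refine Finset.sum_nbij' (i := fun n => n / 2) (j := fun k => 2 * k + 1)
    ?_ ?_ ?_ ?_ ?_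
  · intro a ha
    simp only [Finset.mem_filter, Finset.mem_range, Nat.odd_iff] at ha ⊢
    omega
  · intro a ha
    simp only [Finset.mem_filter, Finset.mem_range, Nat.odd_iff] at ha ⊢
    omega
  · intro a ha
    simp only [Finset.mem_filter, Finset.mem_range, Nat.odd_iff] at ha
    omega
  · intro a _
    omega
  · intro a ha
    simp only [Finset.mem_filter, Finset.mem_range, Nat.odd_iff] at ha
    congr 1
    omega

theorem unknot_bracket_value (r : ℕ) (hr : 3 ≤ r) (hodd : Odd r) (ξ : ℂ)
    (hξ : IsPrimitiveRoot ξ r) (ε : ℤ) (hε : ε = 1 ∨ ε = -1) :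
    (∑ n ∈ (Finset.range (2 * r)).filter (fun n => Odd n),
        ξ ^ (ε * ((n : ℤ) ^ 2 - 1) / 4) *
          (((ξ ^ ((r + 1) / 2)) ^ (n : ℤ) - (ξ ^ ((r + 1) / 2)) ^ (-(n : ℤ))) /
            (ξ ^ ((r + 1) / 2) - (ξ ^ ((r + 1) / 2))⁻¹)) ^ 2) =
      -2 * (ε : ℂ) *
        (∑ n ∈ (Finset.range (2 * r)).filter (fun n => Odd n),
          ξ ^ (ε * ((n : ℤ) ^ 2 - 1) / 4)) *
        (ξ ^ ((r + 1) / 2)) ^ (-ε) / (ξ ^ ((r + 1) / 2) - (ξ ^ ((r + 1) / 2))⁻¹) ∧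
    (∑ n ∈ (Finset.range (2 * r)).filter (fun n => Odd n),
        ξ ^ (ε * ((n : ℤ) ^ 2 - 1) / 4) *
          (((ξ ^ ((r + 1) / 2)) ^ (n : ℤ) - (ξ ^ ((r + 1) / 2)) ^ (-(n : ℤ))) /
            (ξ ^ ((r + 1) / 2) - (ξ ^ ((r + 1) / 2))⁻¹)) ^ 2) ≠ 0 := by
  have hr0 : r ≠ 0 := by omega
  have hξ0 : ξ ≠ 0 := hξ.ne_zero hr0
  have hξr : ξ ^ (r : ℕ) = 1 := hξ.pow_eq_one
  have hξ1 : ξ ≠ 1 := by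
    intro h
    have hd := hξ.dvd_of_pow_eq_one 1 (by rw [h]; simp)
    have := Nat.le_of_dvd one_pos hd
    omega
  have hε2 : ε ^ 2 = 1 := by rcases hε with h | h <;> subst h <;> norm_num
  -- `key`: exponents matter only mod r
  have key : ∀ a b : ℤ, (r:ℤ) ∣ a - b → ξ ^ a = ξ ^ b := by
    intro a b hab
    have h1 : ξ ^ (a - b) = 1 := (hξ.zpow_eq_one_iff_dvd _).mpr hab
    have : ξ ^ a = ξ ^ (b + (a - b)) := by ring_nf
    rw [this, zpow_add₀ hξ0, h1, mul_one]
  set w : ℂ := ξ ^ ((r + 1) / 2) with hw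
  have hw0 : w ≠ 0 := pow_ne_zero _ hξ0
  have hw2 : w ^ 2 = ξ := by
    have h2 : (r + 1) / 2 * 2 = r + 1 := by
      obtain ⟨m, hm⟩ := hodd; omega
    calc w ^ 2 = ξ ^ ((r + 1) / 2 * 2) := (pow_mul ξ _ 2).symm
      _ = ξ ^ (r + 1) := by rw [h2]
      _ = ξ := by rw [pow_succ, hξr, one_mul]
  set D : ℂ := w - w⁻¹ with hD
  have hDne : D ≠ 0 := by
    rw [hD, sub_ne_zero]
    intro h
    have h1 : w * w = 1 := by
      nth_rewrite 2 [h]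
      exact mul_inv_cancel₀ hw0
    exact hξ1 (by rw [← hw2, sq]; exact h1)
  -- zpow facts for w
  have hwz : ∀ m : ℤ, w ^ (2 * m) = ξ ^ m := by
    intro m
    rw [zpow_mul, show (w : ℂ) ^ (2:ℤ) = ξ by
      rw [show (2:ℤ) = ((2:ℕ):ℤ) from rfl, zpow_natCast, hw2]]
  have hwzsq : ∀ m : ℤ, (w ^ m - w ^ (-m)) ^ 2 = ξ ^ m + ξ ^ (-m) - 2 := by
    intro m
    have h1 : w ^ m * w ^ (-m) = 1 := by
      rw [← zpow_add₀ hw0]; simp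
    have h2 : (w ^ m - w ^ (-m)) ^ 2
        = w ^ m * w ^ m - 2 * (w ^ m * w ^ (-m)) + w ^ (-m) * w ^ (-m) := by ring
    rw [h2, h1, ← zpow_add₀ hw0, ← zpow_add₀ hw0,
      show m + m = 2 * m by ring, show -m + -m = 2 * (-m) by ring, hwz, hwz]
    ring
  -- the exponent function and its periodicity
  set g : ℤ → ℂ := fun x => ξ ^ (ε * x * (x + 1)) with hg
  have hgper : ∀ x : ℤ, g (x + r) = g x := by
    intro x
    apply key
    refine ⟨ε * (2 * x + r + 1), ?_⟩
    ring
  set γ : ℂ := ∑ k ∈ Finset.range r, g (k : ℤ) with hγ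
  -- reindex the γ sum
  have hexp : ∀ k : ℕ, ε * (((2 * k + 1 : ℕ) : ℤ) ^ 2 - 1) / 4 = ε * (k:ℤ) * ((k:ℤ) + 1) := by
    intro k
    have : ((2 * k + 1 : ℕ) : ℤ) = 2 * (k:ℤ) + 1 := by push_cast; ring
    rw [this]
    have h4 : ε * ((2 * (k:ℤ) + 1) ^ 2 - 1) = (ε * (k:ℤ) * ((k:ℤ) + 1)) * 4 := by ring
    rw [h4, Int.mul_ediv_cancel _ (by norm_num)]
  have hγfil : (∑ n ∈ (Finset.range (2 * r)).filter (fun n => Odd n),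
      ξ ^ (ε * ((n : ℤ) ^ 2 - 1) / 4)) = γ := by
    rw [sum_odd_reindex]
    apply Finset.sum_congr rfl
    intro k _
    rw [hexp k]
  -- the LHS sum
  have hLfil : (∑ n ∈ (Finset.range (2 * r)).filter (fun n => Odd n),
        ξ ^ (ε * ((n : ℤ) ^ 2 - 1) / 4) *
          ((w ^ (n : ℤ) - w ^ (-(n : ℤ))) / D) ^ 2)
      = (∑ k ∈ Finset.range r,
          (ξ ^ (ε * (k:ℤ) * ((k:ℤ)+1) + (2*(k:ℤ)+1))
            + ξ ^ (ε * (k:ℤ) * ((k:ℤ)+1) - (2*(k:ℤ)+1))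
            - 2 * g (k:ℤ))) / D ^ 2 := by
    rw [sum_odd_reindex, Finset.sum_div]
    apply Finset.sum_congr rfl
    intro k _
    rw [hexp k, div_pow, hwzsq]
    have hcast : ((2 * k + 1 : ℕ) : ℤ) = 2 * (k:ℤ) + 1 := by push_cast; ring
    rw [hcast, hg]
    have e1 : ξ ^ (ε * (k:ℤ) * ((k:ℤ)+1) + (2*(k:ℤ)+1))
        = ξ ^ (ε * (k:ℤ) * ((k:ℤ)+1)) * ξ ^ (2*(k:ℤ)+1) := zpow_add₀ hξ0 _ _
    have e2 : ξ ^ (ε * (k:ℤ) * ((k:ℤ)+1) - (2*(k:ℤ)+1))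
        = ξ ^ (ε * (k:ℤ) * ((k:ℤ)+1)) * ξ ^ (-(2*(k:ℤ)+1)) := by
      rw [sub_eq_add_neg]; exact zpow_add₀ hξ0 _ _
    rw [e1, e2]
    field_simp
  -- the two shifted sums
  have hTplus : ∑ k ∈ Finset.range r, ξ ^ (ε * (k:ℤ) * ((k:ℤ)+1) + (2*(k:ℤ)+1))
      = ξ ^ (-ε) * γ := by
    have h1 : ∀ k : ℕ, ξ ^ (ε * (k:ℤ) * ((k:ℤ)+1) + (2*(k:ℤ)+1))
        = ξ ^ (-ε) * g ((k:ℤ) + ε) := by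
      intro k
      rw [hg]
      rw [← zpow_add₀ hξ0]
      apply key
      refine ⟨0, ?_⟩
      have : ε * (k:ℤ) * ((k:ℤ)+1) + (2*(k:ℤ)+1) - (-ε + ε * ((k:ℤ)+ε) * (((k:ℤ)+ε)+1)) = 0 := by
        linear_combination (-(2*(k:ℤ)) - ε - 1) * hε2
      linarith [this]
    rw [Finset.sum_congr rfl (fun k _ => h1 k), ← Finset.mul_sum,
      rot r g hgper ε]
  have hTminus : ∑ k ∈ Finset.range r, ξ ^ (ε * (k:ℤ) * ((k:ℤ)+1) - (2*(k:ℤ)+1))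
      = ξ ^ (-ε) * γ := by
    have h1 : ∀ k : ℕ, ξ ^ (ε * (k:ℤ) * ((k:ℤ)+1) - (2*(k:ℤ)+1))
        = ξ ^ (-ε) * g ((k:ℤ) + (-ε)) := by
      intro k
      rw [hg]
      rw [← zpow_add₀ hξ0]
      apply key
      refine ⟨0, ?_⟩
      have : ε * (k:ℤ) * ((k:ℤ)+1) - (2*(k:ℤ)+1) - (-ε + ε * ((k:ℤ)+(-ε)) * (((k:ℤ)+(-ε))+1)) = 0 := by
        linear_combination (2*(k:ℤ) - ε + 1) * hε2
      linarith [this]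
    rw [Finset.sum_congr rfl (fun k _ => h1 k), ← Finset.mul_sum,
      rot r g hgper (-ε)]
  -- assemble the LHS
  have hL : (∑ n ∈ (Finset.range (2 * r)).filter (fun n => Odd n),
        ξ ^ (ε * ((n : ℤ) ^ 2 - 1) / 4) *
          ((w ^ (n : ℤ) - w ^ (-(n : ℤ))) / D) ^ 2)
      = 2 * (ξ ^ (-ε) - 1) * γ / D ^ 2 := by
    rw [hLfil]
    congr 1
    rw [Finset.sum_sub_distrib, Finset.sum_add_distrib, hTplus, hTminus, ← Finset.mul_sum, ← hγ]
    ring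
  -- γ ≠ 0 via Gauss sum computation
  have hγne : γ ≠ 0 := by
    set γ' : ℂ := ∑ l ∈ Finset.range r, ξ ^ (-(ε * (l:ℤ) * ((l:ℤ)+1))) with hγ'
    have hprod : γ * γ' = (r : ℂ) := by
      have step1 : γ * γ' = ∑ l ∈ Finset.range r, ∑ k ∈ Finset.range r,
          ξ ^ (-(ε * (l:ℤ) * ((l:ℤ)+1))) * g ((k:ℤ) + (l:ℤ)) := by
        rw [hγ', Finset.mul_sum]
        apply Finset.sum_congr rfl
        intro l _
        rw [mul_comm γ (ξ ^ (-(ε * (l:ℤ) * ((l:ℤ)+1)))), hγ,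
          ← rot r g hgper (l:ℤ), Finset.mul_sum]
      have step2 : ∀ l k : ℕ, ξ ^ (-(ε * (l:ℤ) * ((l:ℤ)+1))) * g ((k:ℤ) + (l:ℤ))
          = ξ ^ (ε * (k:ℤ) * ((k:ℤ)+1)) * (ξ ^ (2 * ε * (k:ℤ))) ^ (l : ℕ) := by
        intro l k
        rw [hg, ← zpow_add₀ hξ0, ← zpow_natCast (ξ ^ (2 * ε * (k:ℤ))) l, ← zpow_mul,
          ← zpow_add₀ hξ0]
        congr 1
        ring
      rw [step1]
      rw [Finset.sum_congr rfl (fun l _ => Finset.sum_congr rfl (fun k _ => step2 l k))]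
      rw [Finset.sum_comm]
      have inner : ∀ k ∈ Finset.range r, ξ ^ (ε * (k:ℤ) * ((k:ℤ)+1)) *
          (∑ l ∈ Finset.range r, (ξ ^ (2 * ε * (k:ℤ))) ^ l)
          = if k = 0 then (r : ℂ) else 0 := by
        intro k hk
        rcases eq_or_ne k 0 with h | h
        · subst h
          simp
        · have hz1 : ξ ^ (2 * ε * (k:ℤ)) ≠ 1 := by
            intro hcon
            have hdvd : (r:ℤ) ∣ 2 * ε * (k:ℤ) := (hξ.zpow_eq_one_iff_dvd _).mp hcon
            have hdvd2 : (r:ℤ) ∣ 2 * (k:ℤ) := by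
              rcases hε with he | he <;> subst he
              · simpa using hdvd
              · simpa using hdvd
            have hdvd3 : r ∣ 2 * k := by
              have := Int.natCast_dvd_natCast.mp hdvd2
              exact this
            have hcop : Nat.Coprime r 2 := hodd.coprime_two_right
            have : r ∣ k := (Nat.Coprime.dvd_of_dvd_mul_left hcop hdvd3)
            have : r ≤ k := Nat.le_of_dvd (Nat.pos_of_ne_zero h) this
            simp only [Finset.mem_range] at hk
            omega
          have hzr : (ξ ^ (2 * ε * (k:ℤ))) ^ r = 1 := by
            rw [← zpow_natCast, ← zpow_mul]
            apply (hξ.zpow_eq_one_iff_dvd _).mpr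
            exact ⟨2 * ε * (k:ℤ), by ring⟩
          rw [if_neg h, geom_sum_eq hz1, hzr, sub_self, zero_div, mul_zero]
      have factored : ∀ k ∈ Finset.range r,
          (∑ l ∈ Finset.range r, ξ ^ (ε * (k:ℤ) * ((k:ℤ)+1)) * (ξ ^ (2 * ε * (k:ℤ))) ^ l)
            = if k = 0 then (r:ℂ) else 0 := by
        intro k hk
        rw [← Finset.mul_sum]
        exact inner k hk
      rw [Finset.sum_congr rfl factored,
        Finset.sum_ite_eq' (Finset.range r) 0 (fun _ => (r:ℂ))]
      simp [Finset.mem_range, Nat.pos_of_ne_zero hr0]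
    intro h
    rw [h, zero_mul] at hprod
    have : (r : ℂ) ≠ 0 := Nat.cast_ne_zero.mpr hr0
    exact this hprod.symm
  -- relate the constant factors
  have hconst : 2 * (ξ ^ (-ε) - 1) = -2 * (ε:ℂ) * w ^ (-ε) * D := by
    rcases hε with he | he <;> subst he
    · have h1 : ξ ^ (-(1:ℤ)) = ξ⁻¹ := by norm_num
      have h2 : (w:ℂ) ^ (-(1:ℤ)) = w⁻¹ := by norm_num
      rw [h1, h2, hD, ← hw2]
      field_simp
      ring
    · have h1 : ξ ^ (-(-1:ℤ)) = ξ := by norm_num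
      have h2 : (w:ℂ) ^ (-(-1:ℤ)) = w := by norm_num
      rw [h1, h2, hD, ← hw2]
      push_cast
      field_simp
  have hmain : (∑ n ∈ (Finset.range (2 * r)).filter (fun n => Odd n),
        ξ ^ (ε * ((n : ℤ) ^ 2 - 1) / 4) *
          ((w ^ (n : ℤ) - w ^ (-(n : ℤ))) / D) ^ 2)
      = -2 * (ε : ℂ) * γ * w ^ (-ε) / D := by
    rw [hL, hconst, sq,
      div_eq_div_iff (mul_ne_zero hDne hDne) hDne]
    ring
  constructor
  · rw [hmain, hγfil]
  · rw [hL]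
    apply div_ne_zero
    · apply mul_ne_zero
      apply mul_ne_zero
      · norm_num
      · rw [sub_ne_zero]
        rcases hε with he | he <;> subst he
        · intro h
          apply hξ1
          have : ξ ^ (-(1:ℤ)) = ξ⁻¹ := by norm_num
          rw [this] at h
          rw [← inv_inv ξ, h, inv_one]
        · intro h
          apply hξ1
          simpa using h
      · exact hγne
    · exact pow_ne_zero 2 hDne
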